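/- Let θ₁ ≤ θ₂ ≤ ⋯ ≤ θ_L ≤ θ₁ + 1 and ω₁ ≤ ω₂ ≤ ⋯ ≤ ω_L ≤ ω₁ + 1 be real numbers such that the unordered L-tuples (e^{2πiθ₁},…,e^{2πiθ_L}) and (e^{2πiω₁},…,e^{2πiω_L}) are equal. Let r = Σ_{j=1}^L (θ_j − ω_j). Then r is an integer and θ_j = ω_{r+j} for all j = 1,…,L, where the sequence (ω_n) is extended to all integer indices n by ω_{pL+s} = ω_s + p for p ∈ ℤ and s ∈ {1,…,L}. -/

import Mathlib

open Finset

private lemma emod_toNat_lt (L : ℕ) (hL : 0 < L) (n : ℤ) : (n % L).toNat < L := by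
  have h0 : (0:ℤ) < L := by exact_mod_cast hL
  have h1 := Int.emod_lt_of_pos n h0
  have h2 := Int.emod_nonneg n (ne_of_gt h0)
  omega

private def finOf (L : ℕ) (hL : 0 < L) (n : ℤ) : Fin L :=
  ⟨(n % L).toNat, emod_toNat_lt L hL n⟩

private lemma decomp_emod (L : ℕ) (hL : 0 < L) (x q : ℤ) (h0 : 0 ≤ x) (h1 : x < L) :
    (x + q * L) % L = x := by
  rw [Int.add_mul_emod_self_right, Int.emod_eq_of_lt h0 h1]

private lemma decomp_ediv (L : ℕ) (hL : 0 < L) (x q : ℤ) (h0 : 0 ≤ x) (h1 : x < L) :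
    (x + q * L) / L = q := by
  have hne : (L:ℤ) ≠ 0 := by positivity
  rw [Int.add_mul_ediv_right x q hne, Int.ediv_eq_zero_of_lt h0 h1, zero_add]

private lemma finOf_decomp (L : ℕ) (hL : 0 < L) (x q : ℤ) (h0 : 0 ≤ x) (h1 : x < L) :
    finOf L hL (x + q * L) = ⟨x.toNat, by omega⟩ := by
  simp only [finOf, decomp_emod L hL x q h0 h1]

private lemma finOf_coe (L : ℕ) (hL : 0 < L) (j : Fin L) : finOf L hL (j : ℤ) = j := by
  have h := finOf_decomp L hL (j : ℤ) 0 (by positivity) (by exact_mod_cast j.2)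
  simp only [zero_mul, add_zero] at h
  rw [h]; ext; simp

private lemma ediv_coe (L : ℕ) (hL : 0 < L) (j : Fin L) : ((j : ℤ)) / L = 0 := by
  have h := decomp_ediv L hL (j : ℤ) 0 (by positivity) (by exact_mod_cast j.2)
  simpa using h

private lemma self_decomp (L : ℕ) (hL : 0 < L) (n : ℤ) :
    ((finOf L hL n : ℕ) : ℤ) + (n / L) * L = n := by
  have h2 := Int.emod_nonneg n (by positivity : (L:ℤ) ≠ 0)
  have : ((finOf L hL n : ℕ) : ℤ) = n % L := by simp [finOf, Int.toNat_of_nonneg h2]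
  rw [this, mul_comm]
  exact Int.emod_add_mul_ediv n L
open Finset
private lemma Ico_singleton (b : ℤ) : Finset.Ico b (b+1) = {b} := by
  ext x; simp; omega

private lemma sum_union' (a b c : ℤ) (h1 : a ≤ b) (h2 : b ≤ c) (f : ℤ → ℤ) :
    ∑ k ∈ Ico a b, f k + ∑ k ∈ Ico b c, f k = ∑ k ∈ Ico a c, f k := by
  rw [← Finset.sum_union (Finset.Ico_disjoint_Ico_consecutive a b c),
    Finset.Ico_union_Ico_eq_Ico h1 h2]

private lemma sum_per (L : ℕ) (hL : 0 < L) (d : ℤ → ℤ) (hd : ∀ k, d (k + L) = d k) (a : ℤ) :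
    ∑ k ∈ Finset.Ico a (a + L), d k = ∑ k ∈ Finset.Ico 0 (L:ℤ), d k := by
  have hL' : (0:ℤ) < L := by exact_mod_cast hL
  have step : ∀ b : ℤ, ∑ k ∈ Finset.Ico (b+1) (b+1+L), d k = ∑ k ∈ Finset.Ico b (b+L), d k := by
    intro b
    have e1 := sum_union' b (b+1) (b+1+L) (by omega) (by omega) d
    have e2 := sum_union' b (b+L) (b+L+1) (by omega) (by omega) d
    rw [show b+1+L = b+L+1 by ring] at e1 ⊢
    rw [Ico_singleton b, Finset.sum_singleton] at e1
    rw [show Finset.Ico (b+L) (b+L+1) = {b+L} from Ico_singleton _, Finset.sum_singleton,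
      hd b] at e2
    omega
  induction a using Int.induction_on with
  | zero => simp
  | succ b ih => rw [show ((b:ℤ)+1) = b+1 by ring, step b]; exact ih
  | pred b ih =>
      have := step (-(b:ℤ)-1)
      rw [show (-(b:ℤ)-1+1) = -b by ring] at this
      rw [← this]
      exact ih
open Finset

private lemma key (L : ℕ) (hL : 0 < L) (F G : ℤ → ℝ)
    (hFm : Monotone F) (hGm : Monotone G)
    (hFp : ∀ n : ℤ, F (n + L) = F n + 1) (hGp : ∀ n : ℤ, G (n + L) = G n + 1)
    (τ τ' : ℤ → ℤ) (hinv1 : ∀ k, τ (τ' k) = k) (hinv2 : ∀ k, τ' (τ k) = k)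
    (hτL : ∀ k, τ (k + L) = τ k + L)
    (hval : ∀ k, F k = G (τ k))
    (p : ℤ) (hsum : ∀ a : ℤ, ∑ k ∈ Finset.Ico a (a + L), (τ k - k) = (L:ℤ) * p)
    (n : ℤ) : F n ≤ G (n + p) := by
  classical
  have hL' : (0:ℤ) < L := by exact_mod_cast hL
  set t := F n with ht
  -- least α with F α ≥ t
  obtain ⟨α, hα1, hα2⟩ := Int.exists_least_of_bdd (P := fun z => t ≤ F z)
    ⟨n - L + 1, fun z hz => by
      by_contra h
      push_neg at h
      have h2 : z + L ≤ n := by omega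
      have := hFm h2
      rw [hFp] at this
      have : F z + 1 ≤ t := this
      linarith [hz]⟩ ⟨n, le_refl t⟩
  obtain ⟨β, hβ1, hβ2⟩ := Int.exists_least_of_bdd (P := fun z => t ≤ G z)
    ⟨τ n - L + 1, fun z hz => by
      by_contra h
      push_neg at h
      have h2 : z + L ≤ τ n := by omega
      have := hGm h2
      rw [hGp] at this
      have h3 : G z + 1 ≤ G (τ n) := this
      rw [← hval n] at h3
      linarith [hz]⟩ ⟨τ n, le_of_eq (hval n)⟩
  have hαn : α ≤ n := hα2 n (le_refl t)
  -- strict versions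
  have hFlt : ∀ k, k < α → F k < t := by
    intro k hk
    by_contra h
    push_neg at h
    exact absurd (hα2 k h) (by omega)
  have hGlt : ∀ j, j < β → G j < t := by
    intro j hj
    by_contra h
    push_neg at h
    exact absurd (hβ2 j h) (by omega)
  -- τ maps Ico (α-L) α into Ico (β-L) β, with inverse τ'
  have hmem : ∀ k ∈ Finset.Ico (α - L) α, τ k ∈ Finset.Ico (β - L) β := by
    intro k hk
    rw [Finset.mem_Ico] at hk ⊢
    constructor
    · by_contra h
      push_neg at h
      have h1 : τ (k + L) < β := by rw [hτL]; omega
      have h2 : G (τ (k + L)) < t := hGlt _ h1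
      rw [← hval] at h2
      have h3 : t ≤ F (k + L) := le_trans hα1 (hFm (by omega))
      linarith
    · by_contra h
      push_neg at h
      have h2 : t ≤ G (τ k) := le_trans hβ1 (hGm h)
      rw [← hval] at h2
      have := hα2 k h2
      omega
  have hmem' : ∀ j ∈ Finset.Ico (β - L) β, τ' j ∈ Finset.Ico (α - L) α := by
    intro j hj
    rw [Finset.mem_Ico] at hj ⊢
    have hvj : F (τ' j) = G j := by rw [hval (τ' j), hinv1]
    constructor
    · by_contra h
      push_neg at h
      have h1 : F (τ' j + L) < t := hFlt _ (by omega)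
      rw [hFp, hvj] at h1
      have h2 : t ≤ G (j + L) := le_trans hβ1 (hGm (by omega))
      rw [hGp] at h2
      linarith
    · by_contra h
      push_neg at h
      have h2 : t ≤ F (τ' j) := le_trans hα1 (hFm h)
      rw [hvj] at h2
      have := hβ2 j h2
      omega
  have hsum2 : ∑ k ∈ Finset.Ico (α - L) α, τ k = ∑ j ∈ Finset.Ico (β - L) β, j :=
    Finset.sum_nbij' (i := τ) (j := τ') hmem hmem' (fun a _ => hinv2 a) (fun a _ => hinv1 a)
      (fun a _ => rfl)
  have hA := hsum (α - L)
  rw [show α - (L:ℤ) + L = α by ring] at hA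
  rw [Finset.sum_sub_distrib] at hA
  have hmap : Finset.Ico (β - L) β = Finset.map (addRightEmbedding (β - α)) (Finset.Ico (α - L) α) := by
    rw [Finset.map_add_right_Ico]
    congr 1 <;> ring
  have hcard : (Finset.Ico (α - L) α).card = L := by
    rw [Int.card_Ico]
    omega
  have htrans : ∑ j ∈ Finset.Ico (β - L) β, j
      = ∑ k ∈ Finset.Ico (α - L) α, k + (L : ℤ) * (β - α) := by
    rw [hmap, Finset.sum_map]
    simp only [addRightEmbedding_apply]
    rw [Finset.sum_add_distrib, Finset.sum_const, hcard]
    push_cast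
    ring
  have hp : β = α + p := by
    rw [hsum2, htrans] at hA
    have : (L:ℤ) * (β - α) = (L:ℤ) * p := by omega
    have := mul_left_cancel₀ (by positivity : (L:ℤ) ≠ 0) this
    omega
  calc F n = t := rfl
    _ ≤ G β := hβ1
    _ ≤ G (n + p) := hGm (by omega)

private def extF (L : ℕ) (hL : 0 < L) (f : Fin L → ℝ) (n : ℤ) : ℝ :=
  f (finOf L hL n) + ((n / L : ℤ) : ℝ)

private lemma extF_per (L : ℕ) (hL : 0 < L) (f : Fin L → ℝ) (n : ℤ) :
    extF L hL f (n + L) = extF L hL f n + 1 := by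
  have hne : (L:ℤ) ≠ 0 := by positivity
  have h1 : (n + L) % L = n % L := by
    simpa using Int.add_mul_emod_self_right (a := n) (b := 1) (c := (L:ℤ))
  have h2 : (n + L) / L = n / L + 1 := by
    simpa using Int.add_mul_ediv_right n 1 hne
  simp only [extF, finOf, h1, h2]
  push_cast
  ring

private lemma extF_mono (L : ℕ) (hL : 0 < L) (f : Fin L → ℝ)
    (hm : Monotone f) (h1 : ∀ j, f j ≤ f ⟨0, hL⟩ + 1) : Monotone (extF L hL f) := by
  apply monotone_int_of_le_succ
  intro n
  have hL' : (0:ℤ) < L := by exact_mod_cast hL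
  have hd := self_decomp L hL n
  set s : Fin L := finOf L hL n with hs
  by_cases hcase : (s : ℕ) + 1 < L
  · have he : n + 1 = ((s:ℕ) + 1 : ℤ) + (n / L) * L := by omega
    have hfin : finOf L hL (n + 1) = ⟨(s:ℕ) + 1, hcase⟩ := by
      rw [he, finOf_decomp L hL _ _ (by positivity) (by exact_mod_cast hcase)]
      ext
      simp
    have hdiv : (n + 1) / L = n / L := by
      rw [he, decomp_ediv L hL _ _ (by positivity) (by exact_mod_cast hcase)]
    simp only [extF, hfin, hdiv, ← hs]
    have : f s ≤ f ⟨(s:ℕ) + 1, hcase⟩ := hm (by simp [Fin.le_def])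
    linarith
  · have hsL : (s : ℕ) + 1 = L := by have := s.2; omega
    have he : n + 1 = (0 : ℤ) + (n / L + 1) * L := by
      have h' : ((s:ℕ):ℤ) + 1 = L := by exact_mod_cast hsL
      have hmul : (n / (L:ℤ) + 1) * L = (n / L) * L + L := by ring
      omega
    have hfin : finOf L hL (n + 1) = ⟨0, hL⟩ := by
      rw [he, finOf_decomp L hL _ _ le_rfl hL']
      ext
      simp
    have hdiv : (n + 1) / L = n / L + 1 := by
      rw [he, decomp_ediv L hL _ _ le_rfl hL']
    simp only [extF, hfin, hdiv, ← hs]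
    have := h1 s
    push_cast
    linarith

private lemma finOf_fin (L : ℕ) (hL : 0 < L) (v : Fin L) (q : ℤ) :
    finOf L hL (((v:ℕ):ℤ) + q * L) = v := by
  rw [finOf_decomp L hL _ q (by positivity) (by exact_mod_cast v.2)]
  ext; simp

private lemma ediv_fin (L : ℕ) (hL : 0 < L) (v : Fin L) (q : ℤ) :
    (((v:ℕ):ℤ) + q * L) / L = q :=
  decomp_ediv L hL _ q (by positivity) (by exact_mod_cast v.2)

private lemma finOf_addL (L : ℕ) (hL : 0 < L) (n : ℤ) : finOf L hL (n + L) = finOf L hL n := by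
  have h1 : (n + L) % L = n % L := by
    simpa using Int.add_mul_emod_self_right (a := n) (b := 1) (c := (L:ℤ))
  simp [finOf, h1]

private lemma ediv_addL (L : ℕ) (hL : 0 < L) (n : ℤ) : (n + L) / L = n / L + 1 := by
  simpa using Int.add_mul_ediv_right n 1 (by positivity : (L:ℤ) ≠ 0)

theorem stmt_2 (L : ℕ) (hL : 0 < L) (θ ω : Fin L → ℝ)
    (hθm : Monotone θ) (hθ1 : ∀ j, θ j ≤ θ ⟨0, hL⟩ + 1)
    (hωm : Monotone ω) (hω1 : ∀ j, ω j ≤ ω ⟨0, hL⟩ + 1)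
    (hperm : ∃ σ : Equiv.Perm (Fin L), ∀ j,
      Complex.exp (2 * Real.pi * Complex.I * (θ j : ℂ)) =
        Complex.exp (2 * Real.pi * Complex.I * (ω (σ j) : ℂ))) :
    ∃ p : ℤ, (∑ j, (θ j - ω j)) = (p : ℝ) ∧
      ∀ j : Fin L, θ j =
        ω ⟨((p + (j : ℕ)) % (L : ℤ)).toNat, by
            have h0 : (0 : ℤ) < (L : ℤ) := by exact_mod_cast hL
            have h1 := Int.emod_lt_of_pos (p + (j : ℕ)) h0
            have h2 := Int.emod_nonneg (p + (j : ℕ)) (ne_of_gt h0)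
            omega⟩
          + (((p + (j : ℕ)) / (L : ℤ) : ℤ) : ℝ) := by
  obtain ⟨σ, hσ⟩ := hperm
  have hm0 : ∀ j, ∃ n : ℤ, θ j = ω (σ j) + n := by
    intro j
    have h := hσ j
    rw [Complex.exp_eq_exp_iff_exists_int] at h
    obtain ⟨k, hk⟩ := h
    refine ⟨k, ?_⟩
    have hne : (2 * (Real.pi:ℂ) * Complex.I) ≠ 0 := by
      simp [Real.pi_ne_zero, Complex.I_ne_zero]
    have h2 : (2 * (Real.pi:ℂ) * Complex.I) * (θ j : ℂ)
        = (2 * (Real.pi:ℂ) * Complex.I) * ((ω (σ j) : ℂ) + k) := by linear_combination hk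
    have h3 := mul_left_cancel₀ hne h2
    exact_mod_cast h3
  choose m hm using hm0
  set p : ℤ := ∑ j, m j with hp
  refine ⟨p, ?_, ?_⟩
  · have hsum1 : ∑ j, θ j = ∑ j, ω j + (p:ℝ) := by
      calc ∑ j, θ j = ∑ j, (ω (σ j) + (m j : ℝ)) := Finset.sum_congr rfl fun j _ => hm j
        _ = ∑ j, ω (σ j) + ∑ j, ((m j : ℤ):ℝ) := Finset.sum_add_distrib
        _ = ∑ j, ω j + (p:ℝ) := by
            rw [Equiv.sum_comp σ ω, hp]
            push_cast
            ring
    rw [Finset.sum_sub_distrib, hsum1]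
    ring
  · -- pointwise statement
    set τ : ℤ → ℤ := fun n =>
      ((σ (finOf L hL n) : ℕ) : ℤ) + (m (finOf L hL n) + n / L) * L with hτ
    set τ' : ℤ → ℤ := fun k =>
      ((σ.symm (finOf L hL k) : ℕ) : ℤ) + (k / L - m (σ.symm (finOf L hL k))) * L with hτ'
    have hfτ : ∀ n, finOf L hL (τ n) = σ (finOf L hL n) := fun n => finOf_fin L hL _ _
    have hdτ : ∀ n, τ n / L = m (finOf L hL n) + n / L := fun n => ediv_fin L hL _ _
    have hfτ' : ∀ k, finOf L hL (τ' k) = σ.symm (finOf L hL k) := fun k => finOf_fin L hL _ _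
    have hdτ' : ∀ k, τ' k / L = k / L - m (σ.symm (finOf L hL k)) := fun k => ediv_fin L hL _ _
    have hinv2 : ∀ n, τ' (τ n) = n := by
      intro n
      simp only [hτ', hfτ, hdτ, Equiv.symm_apply_apply]
      rw [show m (finOf L hL n) + n / L - m (finOf L hL n) = n / L by ring]
      exact self_decomp L hL n
    have hinv1 : ∀ k, τ (τ' k) = k := by
      intro k
      simp only [hτ, hfτ', hdτ', Equiv.apply_symm_apply]
      rw [show m (σ.symm (finOf L hL k)) + (k / (L:ℤ) - m (σ.symm (finOf L hL k))) = k / L by ring]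
      exact self_decomp L hL k
    have hτL : ∀ n, τ (n + L) = τ n + L := by
      intro n
      rw [hτ]
      simp only [finOf_addL L hL, ediv_addL L hL]
      ring
    have hτ'L : ∀ k, τ' (k + L) = τ' k + L := by
      intro k
      rw [hτ']
      simp only [finOf_addL L hL, ediv_addL L hL]
      ring
    have hval : ∀ n, extF L hL θ n = extF L hL ω (τ n) := by
      intro n
      simp only [extF, hfτ, hdτ, hm (finOf L hL n)]
      push_cast
      ring
    have hval' : ∀ k, extF L hL ω k = extF L hL θ (τ' k) := by
      intro k
      simp only [extF, hfτ', hdτ', hm (σ.symm (finOf L hL k)), Equiv.apply_symm_apply]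
      push_cast
      ring
    have hbase : ∀ (g : ℤ → ℤ), (∑ v : Fin L, g ((v:ℕ):ℤ)) = ∑ k ∈ Finset.Ico (0:ℤ) L, g k := by
      intro g
      refine Finset.sum_nbij' (i := fun v : Fin L => ((v:ℕ):ℤ)) (j := fun k => finOf L hL k)
        (fun v _ => ?_) (fun k _ => Finset.mem_univ _) (fun v _ => finOf_coe L hL v)
        (fun k hk => ?_) (fun v _ => rfl)
      · rw [Finset.mem_Ico]
        constructor
        · positivity
        · show ((v:ℕ):ℤ) < (L:ℤ)
          exact_mod_cast v.2
      · rw [Finset.mem_Ico] at hk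
        simp [finOf, Int.emod_eq_of_lt hk.1 hk.2, Int.toNat_of_nonneg hk.1]
    have hτv : ∀ v : Fin L, τ ((v:ℕ):ℤ) = ((σ v : ℕ):ℤ) + m v * L := by
      intro v
      rw [hτ]
      simp only [finOf_coe L hL, ediv_coe L hL, add_zero]
    have hτ'v : ∀ v : Fin L, τ' ((v:ℕ):ℤ) = ((σ.symm v : ℕ):ℤ) - m (σ.symm v) * L := by
      intro v
      rw [hτ']
      simp only [finOf_coe L hL, ediv_coe L hL, zero_sub]
      ring
    have hsumτ : ∀ a : ℤ, ∑ k ∈ Finset.Ico a (a + L), (τ k - k) = (L:ℤ) * p := by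
      intro a
      rw [sum_per L hL _ (fun k => by rw [hτL]; ring) a, ← hbase (fun k => τ k - k)]
      calc ∑ v : Fin L, (τ ((v:ℕ):ℤ) - ((v:ℕ):ℤ))
          = ∑ v : Fin L, ((((σ v : ℕ):ℤ) - ((v:ℕ):ℤ)) + m v * L) :=
            Finset.sum_congr rfl fun v _ => by rw [hτv v]; ring
        _ = (∑ v : Fin L, (((σ v : ℕ):ℤ) - ((v:ℕ):ℤ))) + ∑ v : Fin L, m v * L :=
            Finset.sum_add_distrib
        _ = (L:ℤ) * p := by
            rw [Finset.sum_sub_distrib, Equiv.sum_comp σ (fun v : Fin L => ((v:ℕ):ℤ)), hp,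
              ← Finset.sum_mul]
            ring
    have hsumτ' : ∀ a : ℤ, ∑ k ∈ Finset.Ico a (a + L), (τ' k - k) = (L:ℤ) * (-p) := by
      intro a
      rw [sum_per L hL _ (fun k => by rw [hτ'L]; ring) a, ← hbase (fun k => τ' k - k)]
      calc ∑ v : Fin L, (τ' ((v:ℕ):ℤ) - ((v:ℕ):ℤ))
          = ∑ v : Fin L, ((((σ.symm v : ℕ):ℤ) - ((v:ℕ):ℤ)) - m (σ.symm v) * L) :=
            Finset.sum_congr rfl fun v _ => by rw [hτ'v v]; ring
        _ = (∑ v : Fin L, (((σ.symm v : ℕ):ℤ) - ((v:ℕ):ℤ))) - ∑ v : Fin L, m (σ.symm v) * L :=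
            Finset.sum_sub_distrib _ _
        _ = (L:ℤ) * (-p) := by
            rw [Finset.sum_sub_distrib, Equiv.sum_comp σ.symm (fun v : Fin L => ((v:ℕ):ℤ)),
              ← Finset.sum_mul, Equiv.sum_comp σ.symm m, hp]
            ring
    have hθM := extF_mono L hL θ hθm hθ1
    have hωM := extF_mono L hL ω hωm hω1
    have hθP := extF_per L hL θ
    have hωP := extF_per L hL ω
    have h1 := key L hL (extF L hL θ) (extF L hL ω) hθM hωM hθP hωP τ τ' hinv1 hinv2 hτL hval p hsumτ
    have h2 := key L hL (extF L hL ω) (extF L hL θ) hωM hθM hωP hθP τ' τ hinv2 hinv1 hτ'L hval' (-p) hsumτ'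
    have hEq : ∀ n : ℤ, extF L hL θ n = extF L hL ω (n + p) := by
      intro n
      refine le_antisymm (h1 n) ?_
      have := h2 (n + p)
      rwa [show n + p + -p = n by ring] at this
    intro j
    have h := hEq ((j:ℕ):ℤ)
    rw [show ((j:ℕ):ℤ) + p = p + (j:ℕ) by ring] at h
    have hL0 : extF L hL θ ((j:ℕ):ℤ) = θ j := by
      rw [extF, finOf_coe L hL j, ediv_coe L hL j]
      simp
    rw [hL0] at h
    rw [h]
    rfl
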